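/- For every n ≥ 4, the 2-abelian complexity of the Thue–Morse word is given by: P(2n+1) = 2·(2·|PAIRS(2n)| − E(PAIRS(2n))) and P(2n) = 2·(|PAIRS(2n)| + |PAIRS(2n−2)| − E(PAIRS(2n) ∩ PAIRS(2n−2))), where |S| denotes the cardinality of the finite set S and E(S) denotes the number of even elements of S. -/

import Mathlib

open Fin.NatCast in
/-- The Thue–Morse sequence: sum of binary digits of `n`, mod 2. -/
def tm (n : ℕ) : Fin 2 := ((Nat.digits 2 n).sum : Fin 2)

/-- The factor of the Thue–Morse word of length `n` starting at position `i`. -/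
def tmWord (i n : ℕ) : List (Fin 2) := (List.range n).map (fun j => tm (i + j))

/-- A binary word is a factor of the Thue–Morse word. -/
def IsFactor (w : List (Fin 2)) : Prop := ∃ i : ℕ, w = tmWord i w.length

/-- Number of occurrences of the word `x` as a factor of `u`. -/
def occCount (u x : List (Fin 2)) : ℕ :=
  ((List.range u.length).filter (fun i => (u.drop i).take x.length = x)).length

/-- Two binary words (of equal length) are 2-abelian equivalent: same first letter,
same last letter, and the same number of occurrences of every word of length 2. -/
def TwoAbelianEquiv (u v : List (Fin 2)) : Prop :=
  u.length = v.length ∧ u.take 1 = v.take 1 ∧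
  u.drop (u.length - 1) = v.drop (v.length - 1) ∧
  ∀ x : List (Fin 2), x.length = 2 → occCount u x = occCount v x

/-- `P n` is the 2-abelian complexity of the Thue–Morse word: the number of
2-abelian equivalence classes of factors of length `n`. -/
noncomputable def P (n : ℕ) : ℕ :=
  Nat.card (Quot (fun u v : {w : List (Fin 2) // w.length = n ∧ IsFactor w} =>
    TwoAbelianEquiv u.1 v.1))

/-- `pword w` counts the pairs in `w`: the total number of occurrences of `00` and `11`. -/
def pword (w : List (Fin 2)) : ℕ := occCount w [0, 0] + occCount w [1, 1]

/-- The set of possible pair counts of Thue–Morse factors of length `n`. -/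
def pairs (n : ℕ) : Set ℕ :=
  { m | ∃ w : List (Fin 2), w.length = n ∧ IsFactor w ∧ pword w = m }

/-- The set of possible pair counts of Thue–Morse factors of length `n`
occurring at some odd position (pure odd factors). -/
def PAIRS (n : ℕ) : Set ℕ := { m | ∃ i : ℕ, i % 2 = 1 ∧ pword (tmWord i n) = m }

open Fin.NatCast Fin.CommRing

lemma occCount_nil (x : List (Fin 2)) : occCount [] x = 0 := rfl

lemma occCount_cons (a : Fin 2) (t x : List (Fin 2)) :
    occCount (a :: t) x = (if (a :: t).take x.length = x then 1 else 0) + occCount t x := by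
  unfold occCount
  rw [List.length_cons, List.range_succ_eq_map, List.filter_cons]
  have hc : ((fun i => decide (List.take x.length (List.drop i (a :: t)) = x)) ∘ Nat.succ)
      = fun i => decide (List.take x.length (List.drop i t) = x) := by
    funext i; simp [List.drop_succ_cons]
  simp only [List.drop_zero, List.filter_map, List.length_map, hc]
  by_cases h : (a :: t).take x.length = x <;> simp [h] <;> omega

lemma occCount_single (a : Fin 2) (x : List (Fin 2)) (hx : x.length = 2) :
    occCount [a] x = 0 := by
  rw [occCount_cons, occCount_nil, hx]
  have h2 : List.take 2 [a] = [a] := rfl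
  rw [h2]
  have : ¬ ([a] = x) := by intro h; rw [← h] at hx; simp at hx
  simp [this]

lemma occCount_cons2 (a b : Fin 2) (t x : List (Fin 2)) (hx : x.length = 2) :
    occCount (a :: b :: t) x = (if [a, b] = x then 1 else 0) + occCount (b :: t) x := by
  rw [occCount_cons, hx]; rfl

lemma ind_sum (a b : Fin 2) :
    (if ([a,b] : List (Fin 2)) = [0,0] then 1 else 0) + (if ([a,b] : List (Fin 2)) = [0,1] then 1 else 0)
      + (if ([a,b] : List (Fin 2)) = [1,0] then 1 else 0) + (if ([a,b] : List (Fin 2)) = [1,1] then 1 else 0) = 1 := by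
  revert a b; decide

lemma ind_last (a b : Fin 2) :
    (if ([a,b] : List (Fin 2)) = [1,0] then 1 else 0)
      + (if ([a,b] : List (Fin 2)) = [1,1] then 1 else 0) = if a = 1 then 1 else 0 := by
  revert a b; decide

lemma ind_head (a b : Fin 2) :
    (if ([a,b] : List (Fin 2)) = [0,1] then 1 else 0)
      + (if ([a,b] : List (Fin 2)) = [1,1] then 1 else 0) = if b = 1 then 1 else 0 := by
  revert a b; decide

lemma ind_pw (a b : Fin 2) :
    (if ([a,b] : List (Fin 2)) = [0,0] then 1 else 0)
      + (if ([a,b] : List (Fin 2)) = [1,1] then 1 else 0) = if a = b then 1 else 0 := by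
  revert a b; decide

lemma count1_single (a : Fin 2) : List.count 1 [a] = if a = 1 then 1 else 0 := by
  revert a; decide

-- I1'
lemma occ_sum (u : List (Fin 2)) :
    occCount u [0,0] + occCount u [0,1] + occCount u [1,0] + occCount u [1,1]
      + (u.take 1).length = u.length := by
  induction u with
  | nil => rfl
  | cons a t ih =>
    cases t with
    | nil => simp [occCount_single a [0,0] rfl, occCount_single a [0,1] rfl,
        occCount_single a [1,0] rfl, occCount_single a [1,1] rfl]
    | cons b s =>
      rw [occCount_cons2 a b s [0,0] rfl, occCount_cons2 a b s [0,1] rfl,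
        occCount_cons2 a b s [1,0] rfl, occCount_cons2 a b s [1,1] rfl]
      have h1 := ind_sum a b
      simp only [List.take, List.length_cons] at ih ⊢
      omega

-- I2'
lemma occ_last (u : List (Fin 2)) :
    occCount u [1,0] + occCount u [1,1] + (u.drop (u.length - 1)).count 1 = u.count 1 := by
  induction u with
  | nil => rfl
  | cons a t ih =>
    cases t with
    | nil =>
      simp [occCount_single a [1,0] rfl, occCount_single a [1,1] rfl]
    | cons b s =>
      rw [occCount_cons2 a b s [1,0] rfl, occCount_cons2 a b s [1,1] rfl]
      have h1 := ind_last a b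
      have h2 : (a :: b :: s).length - 1 = (b :: s).length - 1 + 1 := by
        simp
      rw [h2, List.drop_succ_cons]
      have h3 : (a :: b :: s).count 1 = (if a = 1 then 1 else 0) + (b :: s).count 1 := by
        by_cases h : a = 1 <;> simp [h, List.count_cons] <;> omega
      omega

-- I3'
lemma occ_head (u : List (Fin 2)) :
    occCount u [0,1] + occCount u [1,1] + (u.take 1).count 1 = u.count 1 := by
  induction u with
  | nil => rfl
  | cons a t ih =>
    cases t with
    | nil =>
      have h4 : List.take 1 [a] = [a] := rfl
      simp [occCount_single a [0,1] rfl, occCount_single a [1,1] rfl, h4, count1_single]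
    | cons b s =>
      rw [occCount_cons2 a b s [0,1] rfl, occCount_cons2 a b s [1,1] rfl]
      have h1 := ind_head a b
      have h3 : (a :: b :: s).count 1 = (if a = 1 then 1 else 0) + (b :: s).count 1 := by
        by_cases h : a = 1 <;> simp [h, List.count_cons] <;> omega
      have h4 : ((a :: b :: s).take 1).count 1 = if a = 1 then 1 else 0 := by
        have : (a :: b :: s).take 1 = [a] := rfl
        rw [this, count1_single]
      have h5 : ((b :: s).take 1).count 1 = if b = 1 then 1 else 0 := by
        have : (b :: s).take 1 = [b] := rfl
        rw [this, count1_single]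
      omega

-- pword cons
lemma pword_cons2 (a b : Fin 2) (t : List (Fin 2)) :
    pword (a :: b :: t) = (if a = b then 1 else 0) + pword (b :: t) := by
  unfold pword
  rw [occCount_cons2 a b t [0,0] rfl, occCount_cons2 a b t [1,1] rfl]
  have := ind_pw a b
  omega

lemma pword_single (a : Fin 2) : pword [a] = 0 := by
  unfold pword; rw [occCount_single a _ (by simp), occCount_single a _ (by simp)]

lemma pword_le (u : List (Fin 2)) : pword u + 1 ≤ u.length ∨ u.length ≤ 1 := by
  have h := occ_sum u
  unfold pword
  cases u with
  | nil => right; simp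
  | cons a t =>
    cases t with
    | nil => right; simp
    | cons b s =>
      left
      have ht : ((a :: b :: s).take 1).length = 1 := rfl
      rw [ht] at h; omega

def wInv (w : List (Fin 2)) : List (Fin 2) × List (Fin 2) × ℕ × ℕ :=
  (w.take 1, w.drop (w.length - 1), w.count 1, pword w)

lemma twoAbelian_iff (u v : List (Fin 2)) :
    TwoAbelianEquiv u v ↔ (u.length = v.length ∧ wInv u = wInv v) := by
  have su := occ_sum u; have sv := occ_sum v
  have lu := occ_last u; have lv := occ_last v
  have hu := occ_head u; have hv := occ_head v
  constructor
  · rintro ⟨hlen, htake, hdrop, hocc⟩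
    refine ⟨hlen, ?_⟩
    have o10 := hocc [1,0] rfl
    have o11 := hocc [1,1] rfl
    have o00 := hocc [0,0] rfl
    have hcnt : u.count 1 = v.count 1 := by
      rw [hdrop] at lu; omega
    simp only [wInv, Prod.mk.injEq]
    exact ⟨htake, hdrop, hcnt, by unfold pword; omega⟩
  · rintro ⟨hlen, hinv⟩
    simp only [wInv, Prod.mk.injEq] at hinv
    obtain ⟨htake, hdrop, hcnt, hpw⟩ := hinv
    refine ⟨hlen, htake, hdrop, ?_⟩
    intro x hx
    rw [List.length_eq_two] at hx
    obtain ⟨c, d, rfl⟩ := hx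
    unfold pword at hpw
    have e1 : (u.take 1).length = (v.take 1).length := by rw [htake]
    have e2 : (u.drop (u.length - 1)).count 1 = (v.drop (v.length - 1)).count 1 := by rw [hdrop]
    have e3 : (u.take 1).count 1 = (v.take 1).count 1 := by rw [htake]
    have hc : c = 0 ∨ c = 1 := by fin_cases c <;> simp
    have hd : d = 0 ∨ d = 1 := by fin_cases d <;> simp
    rcases hc with rfl | rfl <;> rcases hd with rfl | rfl <;> omega

lemma tm_zero : tm 0 = 0 := by unfold tm; simp

lemma tm_two_mul (m : ℕ) : tm (2 * m) = tm m := by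
  rcases Nat.eq_zero_or_pos m with rfl | hm
  · rfl
  · unfold tm
    rw [Nat.digits_def' (by norm_num : 1 < 2) (by omega : 0 < 2 * m)]
    rw [Nat.mul_div_cancel_left m (by norm_num), Nat.mul_mod_right]
    simp

lemma tm_two_mul_add_one (m : ℕ) : tm (2 * m + 1) = tm m + 1 := by
  unfold tm
  rw [Nat.digits_def' (by norm_num : 1 < 2) (by omega : 0 < 2 * m + 1)]
  have h1 : (2 * m + 1) % 2 = 1 := by omega
  have h2 : (2 * m + 1) / 2 = m := by omega
  rw [h1, h2]
  push_cast [List.sum_cons]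
  ring

-- complement at power of two
lemma tm_add_pow (k i : ℕ) (h : i < 2 ^ k) : tm (i + 2 ^ k) = tm i + 1 := by
  induction k generalizing i with
  | zero =>
    interval_cases i
    show tm (0 + 1) = tm 0 + 1
    rw [tm_zero]
    unfold tm
    norm_num
  | succ k ih =>
    rcases Nat.even_or_odd i with ⟨m, hm⟩ | ⟨m, hm⟩
    · subst hm
      have hmk : m < 2 ^ k := by rw [pow_succ] at h; omega
      have : m + m + 2 ^ (k + 1) = 2 * (m + 2 ^ k) := by rw [pow_succ]; ring
      rw [this, tm_two_mul, ih _ hmk, ← tm_two_mul m]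
      congr 1; ring
    · subst hm
      have hmk : m < 2 ^ k := by rw [pow_succ] at h; omega
      have : 2 * m + 1 + 2 ^ (k + 1) = 2 * (m + 2 ^ k) + 1 := by rw [pow_succ]; ring
      rw [this, tm_two_mul_add_one, ih _ hmk, tm_two_mul_add_one]

-- chi and Pn, cnt1
def chi (i : ℕ) : ℕ := if tm i = tm (i + 1) then 1 else 0
def Pn (i : ℕ) : ℕ → ℕ
  | 0 => 0
  | L + 1 => Pn i L + chi (i + L)
def cnt1 (i : ℕ) : ℕ → ℕ
  | 0 => 0
  | L + 1 => cnt1 i L + (if tm (i + L) = 1 then 1 else 0)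

lemma Pn_le (i L : ℕ) : Pn i L ≤ L := by
  induction L with
  | zero => exact le_refl _
  | succ L ih => unfold Pn chi; split <;> omega

lemma fin2_cases (a : Fin 2) : a = 0 ∨ a = 1 := by fin_cases a <;> simp

lemma fin2_add_one_ne (a : Fin 2) : a + 1 ≠ a := by revert a; decide

lemma chi_even (i : ℕ) : chi (2 * i) = 0 := by
  unfold chi
  rw [(by ring : 2 * i + 1 = 2 * i + 1), tm_two_mul, tm_two_mul_add_one]
  simp [fin2_add_one_ne]

lemma chi_odd (i : ℕ) : chi (2 * i + 1) + chi i = 1 := by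
  unfold chi
  rw [(by ring : 2 * i + 1 + 1 = 2 * (i + 1)), tm_two_mul, tm_two_mul_add_one]
  rcases fin2_cases (tm i) with h | h <;> rcases fin2_cases (tm (i+1)) with h2 | h2 <;>
    rw [h, h2] <;> simp

-- doubling of Pn
lemma Pn_even_even (j m : ℕ) : Pn (2 * j) (2 * m) + Pn j m = m := by
  induction m with
  | zero => rfl
  | succ m ih =>
    have h1 : 2 * (m + 1) = 2 * m + 1 + 1 := by ring
    rw [h1]
    show Pn (2*j) (2*m+1) + chi (2*j + (2*m+1)) + (Pn j m + chi (j + m)) = m + 1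
    show Pn (2*j) (2*m) + chi (2*j + 2*m) + chi (2*j + (2*m+1)) + (Pn j m + chi (j + m)) = m + 1
    have e1 : 2*j + 2*m = 2*(j+m) := by ring
    have e2 : 2*j + (2*m+1) = 2*(j+m) + 1 := by ring
    rw [e1, e2, chi_even]
    have := chi_odd (j + m)
    omega

lemma Pn_odd_even (j m : ℕ) : Pn (2 * j + 1) (2 * m) + Pn j m = m := by
  induction m with
  | zero => rfl
  | succ m ih =>
    have h1 : 2 * (m + 1) = 2 * m + 1 + 1 := by ring
    rw [h1]
    show Pn (2*j+1) (2*m) + chi (2*j+1 + 2*m) + chi (2*j+1 + (2*m+1)) + (Pn j m + chi (j + m)) = m + 1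
    have e1 : 2*j+1 + 2*m = 2*(j+m) + 1 := by ring
    have e2 : 2*j+1 + (2*m+1) = 2*(j+m+1) := by ring
    rw [e1, e2, chi_even]
    have := chi_odd (j + m)
    omega

lemma Pn_even_odd (j m : ℕ) : Pn (2 * j) (2 * m + 1) + Pn j m = m := by
  show Pn (2*j) (2*m) + chi (2*j + 2*m) + Pn j m = m
  rw [(by ring : 2*j + 2*m = 2*(j+m)), chi_even]
  have := Pn_even_even j m
  omega

lemma Pn_odd_odd (j m : ℕ) : Pn (2 * j + 1) (2 * m + 1) + Pn j (m + 1) = m + 1 := by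
  show Pn (2*j+1) (2*m) + chi (2*j+1 + 2*m) + Pn j (m+1) = m + 1
  show Pn (2*j+1) (2*m) + chi (2*j+1 + 2*m) + (Pn j m + chi (j + m)) = m + 1
  rw [(by ring : 2*j+1 + 2*m = 2*(j+m) + 1)]
  have h1 := chi_odd (j + m)
  have h2 := Pn_odd_even j m
  omega

-- K2 : parity transport
lemma tm_shift (j m : ℕ) : tm (j + m) = tm j + (m : Fin 2) + ((Pn j m : ℕ) : Fin 2) := by
  induction m with
  | zero => simp [Pn]
  | succ m ih =>
    show tm (j + m + 1) = _
    have key : tm (j + m + 1) = tm (j + m) + 1 + ((chi (j + m) : ℕ) : Fin 2) := by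
      unfold chi
      rcases eq_or_ne (tm (j+m)) (tm (j+m+1)) with h | h
      · simp [h]
        rcases fin2_cases (tm (j+m+1)) with h2 | h2 <;> rw [h2] <;> decide
      · simp [h]
        rcases fin2_cases (tm (j+m)) with h2 | h2 <;> rcases fin2_cases (tm (j+m+1)) with h3 | h3 <;>
          rw [h2, h3] <;> first | rfl | (exfalso; rw [h2, h3] at h; simp at h)
    rw [key, ih]
    show _ = tm j + ((m + 1 : ℕ) : Fin 2) + ((Pn j m + chi (j + m) : ℕ) : Fin 2)
    push_cast
    ring

-- complement preservation of Pn
lemma chi_add_pow (k i : ℕ) (h : i + 1 < 2 ^ k) : chi (i + 2 ^ k) = chi i := by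
  unfold chi
  rw [tm_add_pow k i (by omega), (by ring : i + 2^k + 1 = (i+1) + 2^k), tm_add_pow k (i+1) h]
  rcases fin2_cases (tm i) with h2 | h2 <;> rcases fin2_cases (tm (i+1)) with h3 | h3 <;>
    rw [h2, h3] <;> decide

lemma Pn_add_pow (k j m : ℕ) (h : j + m < 2 ^ k) : Pn (j + 2 ^ k) m = Pn j m := by
  induction m with
  | zero => rfl
  | succ m ih =>
    show Pn (j + 2^k) m + chi (j + 2^k + m) = Pn j m + chi (j + m)
    rw [ih (by omega), (by ring : j + 2^k + m = (j+m) + 2^k), chi_add_pow k (j+m) (by omega)]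

-- realization of both complement variants
lemma exists_compl (j m : ℕ) (s : Fin 2) : ∃ j', tm j' = s ∧ Pn j' m = Pn j m := by
  rcases eq_or_ne (tm j) s with h | h
  · exact ⟨j, h, rfl⟩
  · have hlt : j + m < 2 ^ (j + m + 1) :=
      lt_of_le_of_lt (Nat.le_succ _) (Nat.lt_two_pow_self (n := j + m + 1))
    refine ⟨j + 2 ^ (j + m + 1), ?_, Pn_add_pow _ _ _ hlt⟩
    rw [tm_add_pow _ _ (by omega : j < 2 ^ (j + m + 1))]
    rcases fin2_cases (tm j) with h2 | h2 <;> rcases fin2_cases s with h3 | h3 <;>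
      rw [h2, h3] <;> first | rfl | (exfalso; rw [h2, h3] at h; simp at h)

def vv (i : ℕ) : ℕ := if tm i = 1 then 1 else 0

lemma length_tmWord (i L : ℕ) : (tmWord i L).length = L := by
  unfold tmWord; rw [List.length_map, List.length_range]

lemma tmWord_zero (i : ℕ) : tmWord i 0 = [] := rfl

lemma tmWord_succ_left (i L : ℕ) : tmWord i (L + 1) = tm i :: tmWord (i + 1) L := by
  unfold tmWord
  rw [List.range_succ_eq_map, List.map_cons, List.map_map]
  congr 1
  apply List.map_congr_left
  intro j _
  simp only [Function.comp_apply]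
  congr 1
  omega

lemma tmWord_succ_right (i L : ℕ) : tmWord i (L + 1) = tmWord i L ++ [tm (i + L)] := by
  unfold tmWord
  rw [List.range_succ, List.map_append, List.map_singleton]

lemma tmWord_take1 (i L : ℕ) : (tmWord i (L + 1)).take 1 = [tm i] := by
  rw [tmWord_succ_left]; rfl

lemma tmWord_drop (i L : ℕ) :
    (tmWord i (L + 1)).drop ((tmWord i (L + 1)).length - 1) = [tm (i + L)] := by
  rw [length_tmWord, tmWord_succ_right]
  have h : L + 1 - 1 = (tmWord i L).length := by rw [length_tmWord]; omega
  rw [h, List.drop_left]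

lemma count_tmWord (i L : ℕ) : (tmWord i L).count 1 = cnt1 i L := by
  induction L with
  | zero => rfl
  | succ L ih =>
    rw [tmWord_succ_right, List.count_append]
    show _ = cnt1 i L + _
    rw [← ih]
    rcases fin2_cases (tm (i + L)) with h | h <;> rw [h] <;> simp

lemma Pn_succ_left (i L : ℕ) : Pn i (L + 1) = chi i + Pn (i + 1) L := by
  induction L generalizing i with
  | zero => show Pn i 0 + chi (i+0) = chi i + 0; simp [Pn]
  | succ L ih =>
    show Pn i (L+1) + chi (i + (L+1)) = chi i + (Pn (i+1) L + chi (i+1+L))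
    rw [ih i]
    have : i + (L + 1) = i + 1 + L := by omega
    rw [this]; ring

lemma pword_tmWord (i L : ℕ) : pword (tmWord i (L + 1)) = Pn i L := by
  induction L generalizing i with
  | zero => rw [tmWord_succ_left, tmWord_zero, pword_single]; rfl
  | succ L ih =>
    rw [tmWord_succ_left, tmWord_succ_left (i+1), pword_cons2, ← tmWord_succ_left (i+1),
      ih (i+1), Pn_succ_left]
    rfl

-- cnt1 helpers
lemma vv_pair (j : ℕ) : vv (2 * j) + vv (2 * j + 1) = 1 := by
  unfold vv
  rw [tm_two_mul, tm_two_mul_add_one]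
  rcases fin2_cases (tm j) with h | h <;> rw [h] <;> simp

lemma cnt1_step2 (i L : ℕ) : cnt1 i (L + 2) = cnt1 i L + vv (i + L) + vv (i + L + 1) := by
  show cnt1 i L + (if tm (i + L) = 1 then 1 else 0) + (if tm (i + (L+1)) = 1 then 1 else 0) = _
  unfold vv
  have h : i + (L + 1) = i + L + 1 := by omega
  rw [h]

lemma cnt1_even_even (j m : ℕ) : cnt1 (2 * j) (2 * m) = m := by
  induction m with
  | zero => rfl
  | succ m ih =>
    have h : 2 * (m + 1) = 2 * m + 2 := by ring
    rw [h, cnt1_step2, ih]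
    have e1 : 2 * j + 2 * m = 2 * (j + m) := by ring
    rw [e1]
    have := vv_pair (j + m)
    omega

lemma cnt1_even_odd (j m : ℕ) : cnt1 (2 * j) (2 * m + 1) = m + vv (j + m) := by
  show cnt1 (2*j) (2*m) + _ = _
  rw [cnt1_even_even]
  have e1 : 2 * j + 2 * m = 2 * (j + m) := by ring
  unfold vv
  rw [e1, tm_two_mul]

lemma cnt1_succ_left (i L : ℕ) : cnt1 i (L + 1) = vv i + cnt1 (i + 1) L := by
  induction L generalizing i with
  | zero => show cnt1 i 0 + _ = _ + 0; unfold vv cnt1; simp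
  | succ L ih =>
    show cnt1 i (L+1) + (if tm (i + (L+1)) = 1 then 1 else 0) = vv i + (cnt1 (i+1) L + (if tm (i+1+L) = 1 then 1 else 0))
    rw [ih i]
    have : i + (L + 1) = i + 1 + L := by omega
    rw [this]; ring

lemma cnt1_odd_odd (j m : ℕ) : cnt1 (2 * j + 1) (2 * m + 1) + vv j = m + 1 := by
  have h := cnt1_succ_left (2 * j) (2 * m + 1)
  have h3 : cnt1 (2 * j) (2 * m + 1 + 1) = m + 1 := by
    have e : 2 * m + 1 + 1 = 2 * (m + 1) := by ring
    rw [e, cnt1_even_even]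
  have hvv : vv (2 * j) = vv j := by unfold vv; rw [tm_two_mul]
  rw [hvv] at h
  omega

lemma cnt1_odd_even (j m : ℕ) : cnt1 (2 * j + 1) (2 * m) + vv j = m + vv (j + m) := by
  have h4 := cnt1_succ_left (2 * j) (2 * m)
  rw [cnt1_even_odd] at h4
  have hvv : vv (2 * j) = vv j := by unfold vv; rw [tm_two_mul]
  rw [hvv] at h4
  omega

-- quad shapes
def gA (n : ℕ) (s : Fin 2) (q : ℕ) : List (Fin 2) × List (Fin 2) × ℕ × ℕ :=
  ([s], [s + (q : Fin 2)], n + (s + (q : Fin 2)).val, q)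
def gB (n : ℕ) (s : Fin 2) (q : ℕ) : List (Fin 2) × List (Fin 2) × ℕ × ℕ :=
  ([s], [s + (q : Fin 2)], n + s.val, q)
def gC (n : ℕ) (s : Fin 2) (r : ℕ) : List (Fin 2) × List (Fin 2) × ℕ × ℕ :=
  ([s], [s + (r : Fin 2) + 1], n, r)
def gD (n : ℕ) (s : Fin 2) (q : ℕ) : List (Fin 2) × List (Fin 2) × ℕ × ℕ :=
  ([s], [s + (q : Fin 2) + 1], n - 1 + s.val + (s + (q : Fin 2) + 1).val, q)

lemma cast_split {p q n : ℕ} (h : q + p = n) : (n : Fin 2) + (p : Fin 2) = (q : Fin 2) := by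
  have h1 : ((n + p : ℕ) : Fin 2) = ((q + 2 * p : ℕ) : Fin 2) := by
    congr 1; omega
  push_cast at h1
  simpa using h1

lemma vv_val (i : ℕ) : vv i = (tm i).val := by
  unfold vv
  rcases fin2_cases (tm i) with h | h <;> rw [h] <;> simp

lemma f_add11 (a b : Fin 2) : a + 1 + b + 1 = a + b := by revert a b; decide
lemma f_val_add1 (s : Fin 2) : (s + 1).val + s.val = 1 := by revert s; decide
lemma vv_le (i : ℕ) : vv i ≤ 1 := by unfold vv; split <;> omega

-- main wInv computations
lemma wInv_ee (j n : ℕ) : wInv (tmWord (2*j) (2*n+1)) = gA n (tm j) (n - Pn j n) := by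
  have hp := Pn_le j n
  have hq : (n - Pn j n) + Pn j n = n := by omega
  have hlast : tm (2*j + 2*n) = tm j + ((n - Pn j n : ℕ) : Fin 2) := by
    have e : 2*j + 2*n = 2*(j+n) := by ring
    rw [e, tm_two_mul, tm_shift j n, add_assoc, cast_split hq]
  unfold wInv gA
  rw [length_tmWord, tmWord_take1, tm_two_mul]
  have hd := tmWord_drop (2*j) (2*n)
  rw [length_tmWord] at hd
  rw [hd, hlast, count_tmWord, cnt1_even_odd, pword_tmWord]
  have hpw : Pn (2*j) (2*n) = n - Pn j n := by have := Pn_even_even j n; omega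
  rw [hpw, vv_val]
  have e : 2*j + 2*n = 2*(j+n) := by ring
  have : tm (j + n) = tm j + ((n - Pn j n : ℕ) : Fin 2) := by
    rw [← tm_two_mul (j+n), ← e, hlast]
  rw [this]

lemma wInv_oo (j n : ℕ) : wInv (tmWord (2*j+1) (2*n+1)) = gB n (tm j + 1) (n - Pn j n) := by
  have hp := Pn_le j n
  have hq : (n - Pn j n) + Pn j n = n := by omega
  have hlast : tm (2*j+1 + 2*n) = tm j + 1 + ((n - Pn j n : ℕ) : Fin 2) := by
    have e : 2*j+1 + 2*n = 2*(j+n) + 1 := by ring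
    rw [e, tm_two_mul_add_one, tm_shift j n, ← cast_split hq]
    ring
  unfold wInv gB
  rw [length_tmWord, tmWord_take1, tm_two_mul_add_one]
  have hd := tmWord_drop (2*j+1) (2*n)
  rw [length_tmWord] at hd
  rw [hd, hlast, count_tmWord, pword_tmWord]
  have hpw : Pn (2*j+1) (2*n) = n - Pn j n := by have := Pn_odd_even j n; omega
  have hc : cnt1 (2*j+1) (2*n+1) = n + (tm j + 1).val := by
    have h1 := cnt1_odd_odd j n
    have h2 := f_val_add1 (tm j)
    have h3 := vv_val j
    omega
  rw [hpw, hc]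

lemma wInv_ec (j m : ℕ) : wInv (tmWord (2*j) (2*m+2)) = gC (m+1) (tm j) (m - Pn j m) := by
  have hp := Pn_le j m
  have hq : (m - Pn j m) + Pn j m = m := by omega
  have hlast : tm (2*j + (2*m+1)) = tm j + ((m - Pn j m : ℕ) : Fin 2) + 1 := by
    have e : 2*j + (2*m+1) = 2*(j+m) + 1 := by ring
    rw [e, tm_two_mul_add_one, tm_shift j m, ← cast_split hq]
    ring
  unfold wInv gC
  have e1 : 2*m+2 = (2*m+1) + 1 := by ring
  rw [e1, length_tmWord, tmWord_take1, tm_two_mul]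
  have hd := tmWord_drop (2*j) (2*m+1)
  rw [length_tmWord] at hd
  rw [hd, hlast, count_tmWord, pword_tmWord]
  have hpw : Pn (2*j) (2*m+1) = m - Pn j m := by have := Pn_even_odd j m; omega
  have hc : cnt1 (2*j) (2*m+1+1) = m + 1 := by
    have e : 2*m+1+1 = 2*(m+1) := by ring
    rw [e, cnt1_even_even]
  rw [hpw, hc]

lemma wInv_oc (j m : ℕ) :
    wInv (tmWord (2*j+1) (2*m+2)) = gD (m+1) (tm j + 1) ((m+1) - Pn j (m+1)) := by
  have hp := Pn_le j (m+1)
  set p := Pn j (m+1) with hpdef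
  have hq : ((m+1) - p) + p = m + 1 := by omega
  have hshift : tm (j + (m+1)) = tm j + (((m+1) - p : ℕ) : Fin 2) := by
    rw [tm_shift j (m+1), add_assoc, cast_split hq]
  have hlast : tm (2*j+1 + (2*m+1)) = tm j + 1 + (((m+1) - p : ℕ) : Fin 2) + 1 := by
    have e : 2*j+1 + (2*m+1) = 2*(j+(m+1)) := by ring
    rw [e, tm_two_mul, hshift, f_add11]
  unfold wInv gD
  have e1 : 2*m+2 = (2*m+1) + 1 := by ring
  rw [e1, length_tmWord, tmWord_take1, tm_two_mul_add_one]
  have hd := tmWord_drop (2*j+1) (2*m+1)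
  rw [length_tmWord] at hd
  rw [hd, hlast, count_tmWord, pword_tmWord]
  have hpw : Pn (2*j+1) (2*m+1) = (m+1) - p := by have := Pn_odd_odd j m; omega
  have hc : cnt1 (2*j+1) (2*m+1+1) =
      m + 1 - 1 + (tm j + 1).val + (tm j + 1 + (((m+1) - p : ℕ) : Fin 2) + 1).val := by
    have e : 2*m+1+1 = 2*(m+1) := by ring
    rw [e]
    have h1 := cnt1_odd_even j (m+1)
    have h2 : tm j + 1 + (((m+1) - p : ℕ) : Fin 2) + 1 = tm (j + (m+1)) := by
      rw [f_add11, hshift]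
    rw [h2]
    have h3 := f_val_add1 (tm j)
    have h4 := vv_val j
    have h5 := vv_val (j + (m+1))
    omega
  rw [hpw, hc]

lemma P_eq (N : ℕ) : P N = Nat.card (Set.range (fun i => wInv (tmWord i N))) := by
  apply Nat.card_congr
  have hmem : ∀ w : {w : List (Fin 2) // w.length = N ∧ IsFactor w},
      wInv w.1 ∈ Set.range (fun i => wInv (tmWord i N)) := by
    rintro ⟨w, hlen, i, hw⟩
    rw [hlen] at hw
    exact ⟨i, by show wInv (tmWord i N) = wInv w; rw [← hw]⟩
  apply Equiv.ofBijective
    (Quot.lift (fun w : {w : List (Fin 2) // w.length = N ∧ IsFactor w} =>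
        (⟨wInv w.1, hmem w⟩ : (Set.range (fun i => wInv (tmWord i N)))))
      (fun u v h => Subtype.ext ((twoAbelian_iff u.1 v.1).1 h).2))
  constructor
  · intro a b
    induction a using Quot.ind with | _ u =>
    induction b using Quot.ind with | _ v =>
    intro hab
    have h1 : wInv u.1 = wInv v.1 := congrArg Subtype.val hab
    apply Quot.sound
    exact (twoAbelian_iff u.1 v.1).2 ⟨u.2.1.trans v.2.1.symm, h1⟩
  · rintro ⟨y, i, rfl⟩
    refine ⟨Quot.mk _ ⟨tmWord i N, length_tmWord i N, ⟨i, by rw [length_tmWord]⟩⟩, rfl⟩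

lemma mem_PAIRS (m q : ℕ) : q ∈ PAIRS (2*(m+1)) ↔ ∃ j, q + Pn j (m+1) = m+1 := by
  unfold PAIRS
  simp only [Set.mem_setOf_eq]
  constructor
  · rintro ⟨i, hi, hq⟩
    obtain ⟨j, rfl⟩ : ∃ j, i = 2*j+1 := ⟨i/2, by omega⟩
    have e : 2*(m+1) = (2*m+1)+1 := by ring
    rw [e, pword_tmWord] at hq
    have := Pn_odd_odd j m
    exact ⟨j, by omega⟩
  · rintro ⟨j, hj⟩
    refine ⟨2*j+1, by omega, ?_⟩
    have e : 2*(m+1) = (2*m+1)+1 := by ring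
    rw [e, pword_tmWord]
    have := Pn_odd_odd j m
    omega

lemma PAIRS_finite (m : ℕ) : (PAIRS (2*(m+1))).Finite := by
  apply Set.Finite.subset (Set.finite_Iic (m+1))
  intro q hq
  rw [mem_PAIRS] at hq
  obtain ⟨j, hj⟩ := hq
  simp only [Set.mem_Iic]
  omega

noncomputable def Qf (m : ℕ) : Finset ℕ := (PAIRS_finite m).toFinset

lemma mem_Qf (m q : ℕ) : q ∈ Qf m ↔ ∃ j, q + Pn j (m+1) = m+1 := by
  rw [Qf, Set.Finite.mem_toFinset, mem_PAIRS]

noncomputable def CA (n q : ℕ) : Finset (List (Fin 2) × List (Fin 2) × ℕ × ℕ) :=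
  Finset.image (fun s : Fin 2 => gA n s q) Finset.univ ∪
  Finset.image (fun s : Fin 2 => gB n s q) Finset.univ

lemma fin2_two (s : Fin 2) : s + 1 + 1 = s := by revert s; decide

lemma fourth_CA {n q : ℕ} {y : List (Fin 2) × List (Fin 2) × ℕ × ℕ}
    (hy : y ∈ CA n q) : y.2.2.2 = q := by
  rcases Finset.mem_union.1 hy with h | h <;>
    obtain ⟨s, -, rfl⟩ := Finset.mem_image.1 h <;> rfl

lemma range_odd (m : ℕ) : (Set.range fun i => wInv (tmWord i (2*(m+1)+1)))
    = ↑((Qf m).biUnion (fun q => CA (m+1) q)) := by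
  ext y
  simp only [Set.mem_range, Finset.coe_biUnion, Set.mem_iUnion, Finset.mem_coe]
  constructor
  · rintro ⟨i, rfl⟩
    rcases Nat.even_or_odd i with ⟨j, hj⟩ | ⟨j, hj⟩
    · obtain rfl : i = 2*j := by omega
      refine ⟨(m+1) - Pn j (m+1), ?_, ?_⟩
      · rw [mem_Qf]; exact ⟨j, by have := Pn_le j (m+1); omega⟩
      · rw [wInv_ee j (m+1)]
        exact Finset.mem_union_left _ (Finset.mem_image.2 ⟨tm j, Finset.mem_univ _, rfl⟩)
    · obtain rfl : i = 2*j+1 := by omega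
      refine ⟨(m+1) - Pn j (m+1), ?_, ?_⟩
      · rw [mem_Qf]; exact ⟨j, by have := Pn_le j (m+1); omega⟩
      · rw [wInv_oo j (m+1)]
        exact Finset.mem_union_right _ (Finset.mem_image.2 ⟨tm j + 1, Finset.mem_univ _, rfl⟩)
  · rintro ⟨q, hq, hyq⟩
    rw [mem_Qf] at hq
    obtain ⟨j0, hj0⟩ := hq
    have hple := Pn_le j0 (m+1)
    rcases Finset.mem_union.1 hyq with h | h <;> obtain ⟨s, -, rfl⟩ := Finset.mem_image.1 h
    · obtain ⟨j, hjs, hjp⟩ := exists_compl j0 (m+1) s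
      refine ⟨2*j, ?_⟩
      rw [wInv_ee j (m+1), hjs, hjp]
      have : (m+1) - Pn j0 (m+1) = q := by omega
      rw [this]
    · obtain ⟨j, hjs, hjp⟩ := exists_compl j0 (m+1) (s+1)
      refine ⟨2*j+1, ?_⟩
      rw [wInv_oo j (m+1), hjs, hjp, fin2_two]
      have : (m+1) - Pn j0 (m+1) = q := by omega
      rw [this]

lemma fin2_cast_even {q : ℕ} (h : q % 2 = 0) : ((q : ℕ) : Fin 2) = 0 := by
  apply Fin.ext
  rw [Fin.val_natCast]
  simp [h]

lemma fin2_cast_odd {q : ℕ} (h : q % 2 = 1) : ((q : ℕ) : Fin 2) = 1 := by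
  apply Fin.ext
  rw [Fin.val_natCast]
  simp [h]

lemma gB_inj (n q : ℕ) : Function.Injective (fun s : Fin 2 => gB n s q) := by
  intro a b hab
  have := congrArg (fun y => y.1) hab
  simpa [gB] using this

lemma gA_inj (n q : ℕ) : Function.Injective (fun s : Fin 2 => gA n s q) := by
  intro a b hab
  have := congrArg (fun y => y.1) hab
  simpa [gA] using this

lemma fin2_val_ne (a : Fin 2) : (a + 1).val ≠ a.val := by revert a; decide

lemma card_CA (n q : ℕ) : (CA n q).card = if q % 2 = 0 then 2 else 4 := by
  rcases Nat.mod_two_eq_zero_or_one q with h | h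
  · rw [if_pos h]
    have hc : ((q : ℕ) : Fin 2) = 0 := fin2_cast_even h
    have hfun : (fun s : Fin 2 => gA n s q) = (fun s : Fin 2 => gB n s q) := by
      funext s; unfold gA gB; rw [hc, add_zero]
    unfold CA
    rw [hfun, Finset.union_self, Finset.card_image_of_injective _ (gB_inj n q),
      Finset.card_univ, Fintype.card_fin]
  · rw [if_neg (by omega)]
    have hc : ((q : ℕ) : Fin 2) = 1 := fin2_cast_odd h
    unfold CA
    rw [Finset.card_union_of_disjoint, Finset.card_image_of_injective _ (gA_inj n q),
      Finset.card_image_of_injective _ (gB_inj n q), Finset.card_univ, Fintype.card_fin]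
    rw [Finset.disjoint_left]
    rintro y hyA hyB
    obtain ⟨a, -, rfl⟩ := Finset.mem_image.1 hyA
    obtain ⟨b, -, hb⟩ := Finset.mem_image.1 hyB
    have h1 : b = a := by
      have := congrArg (fun y => y.1) hb
      simpa [gA, gB] using this
    subst h1
    have h3 : n + b.val = n + (b + (q : Fin 2)).val := by
      have := congrArg (fun y => y.2.2.1) hb
      simpa [gA, gB] using this
    rw [hc] at h3
    have := fin2_val_ne b
    omega

lemma card_biUnion_CA (m : ℕ) : ((Qf m).biUnion (fun q => CA (m+1) q)).card
    = 4 * (Qf m).card - 2 * ((Qf m).filter (fun q => q % 2 = 0)).card := by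
  rw [Finset.card_biUnion]
  · have h1 : ∀ q ∈ Qf m, (CA (m+1) q).card = if q % 2 = 0 then 2 else 4 :=
      fun q _ => card_CA (m+1) q
    rw [Finset.sum_congr rfl h1, Finset.sum_ite, Finset.sum_const, Finset.sum_const,
      smul_eq_mul, smul_eq_mul]
    have h2 := Finset.card_filter_add_card_filter_not (s := Qf m)
      (fun q => q % 2 = 0)
    omega
  · intro x hx y hy hxy
    rw [Function.onFun, Finset.disjoint_left]
    intro a hax hay
    exact hxy ((fourth_CA hax).symm.trans (fourth_CA hay))

noncomputable def CC (n r : ℕ) : Finset (List (Fin 2) × List (Fin 2) × ℕ × ℕ) :=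
  Finset.image (fun s : Fin 2 => gC n s r) Finset.univ
noncomputable def CD (n q : ℕ) : Finset (List (Fin 2) × List (Fin 2) × ℕ × ℕ) :=
  Finset.image (fun s : Fin 2 => gD n s q) Finset.univ

noncomputable def C2 (k q : ℕ) : Finset (List (Fin 2) × List (Fin 2) × ℕ × ℕ) :=
  (if q ∈ Qf (k+1) then CD (k+2) q else ∅) ∪ (if q ∈ Qf k then CC (k+2) q else ∅)

lemma fourth_C2 {k q : ℕ} {y : List (Fin 2) × List (Fin 2) × ℕ × ℕ}
    (hy : y ∈ C2 k q) : y.2.2.2 = q := by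
  rcases Finset.mem_union.1 hy with h | h
  · by_cases hc : q ∈ Qf (k+1)
    · rw [if_pos hc] at h
      obtain ⟨s, -, rfl⟩ := Finset.mem_image.1 h
      rfl
    · rw [if_neg hc] at h
      exact absurd h (Finset.notMem_empty y)
  · by_cases hc : q ∈ Qf k
    · rw [if_pos hc] at h
      obtain ⟨s, -, rfl⟩ := Finset.mem_image.1 h
      rfl
    · rw [if_neg hc] at h
      exact absurd h (Finset.notMem_empty y)

lemma range_even (k : ℕ) : (Set.range fun i => wInv (tmWord i (2*(k+1)+2)))
    = ↑(((Qf (k+1)) ∪ (Qf k)).biUnion (C2 k)) := by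
  ext y
  simp only [Set.mem_range, Finset.coe_biUnion, Set.mem_iUnion, Finset.mem_coe]
  constructor
  · rintro ⟨i, rfl⟩
    rcases Nat.even_or_odd i with ⟨j, hj⟩ | ⟨j, hj⟩
    · obtain rfl : i = 2*j := by omega
      have hple := Pn_le j (k+1)
      refine ⟨(k+1) - Pn j (k+1), ?_, ?_⟩
      · apply Finset.mem_union_right
        rw [mem_Qf]; exact ⟨j, by omega⟩
      · rw [wInv_ec j (k+1)]
        unfold C2
        apply Finset.mem_union_right
        rw [if_pos (by rw [mem_Qf]; exact ⟨j, by omega⟩)]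
        exact Finset.mem_image.2 ⟨tm j, Finset.mem_univ _, rfl⟩
    · obtain rfl : i = 2*j+1 := by omega
      have hple := Pn_le j (k+2)
      have hPn : Pn j (k+1+1) = Pn j (k+2) := rfl
      refine ⟨(k+2) - Pn j (k+2), ?_, ?_⟩
      · apply Finset.mem_union_left
        rw [mem_Qf]; exact ⟨j, by omega⟩
      · rw [wInv_oc j (k+1)]
        unfold C2
        apply Finset.mem_union_left
        rw [if_pos (by rw [mem_Qf]; exact ⟨j, by omega⟩)]
        have he : k+1+1 - Pn j (k+1+1) = k+2 - Pn j (k+2) := by omega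
        rw [show (k+1+1 : ℕ) = k+2 from rfl]
        exact Finset.mem_image.2 ⟨tm j + 1, Finset.mem_univ _, rfl⟩
  · rintro ⟨q, hq, hyq⟩
    rcases Finset.mem_union.1 hyq with h | h
    · by_cases hc : q ∈ Qf (k+1)
      swap
      · rw [if_neg hc] at h; exact absurd h (Finset.notMem_empty y)
      rw [if_pos hc] at h
      obtain ⟨s, -, rfl⟩ := Finset.mem_image.1 h
      rw [mem_Qf] at hc
      obtain ⟨j0, hj0⟩ := hc
      have hple := Pn_le j0 (k+2)
      have hPn0 : Pn j0 (k+1+1) = Pn j0 (k+2) := rfl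
      obtain ⟨j, hjs, hjp⟩ := exists_compl j0 (k+2) (s+1)
      refine ⟨2*j+1, ?_⟩
      rw [wInv_oc j (k+1)]
      rw [show (k+1+1 : ℕ) = k+2 from rfl]
      rw [hjs, hjp, fin2_two]
      have : (k+2) - Pn j0 (k+2) = q := by omega
      rw [this]
    · by_cases hc : q ∈ Qf k
      swap
      · rw [if_neg hc] at h; exact absurd h (Finset.notMem_empty y)
      rw [if_pos hc] at h
      obtain ⟨s, -, rfl⟩ := Finset.mem_image.1 h
      rw [mem_Qf] at hc
      obtain ⟨j0, hj0⟩ := hc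
      have hple := Pn_le j0 (k+1)
      obtain ⟨j, hjs, hjp⟩ := exists_compl j0 (k+1) s
      refine ⟨2*j, ?_⟩
      rw [wInv_ec j (k+1), hjs, hjp]
      have : (k+1) - Pn j0 (k+1) = q := by omega
      rw [this]

lemma gC_inj (n q : ℕ) : Function.Injective (fun s : Fin 2 => gC n s q) := by
  intro a b hab
  have := congrArg (fun y => y.1) hab
  simpa [gC] using this

lemma gD_inj (n q : ℕ) : Function.Injective (fun s : Fin 2 => gD n s q) := by
  intro a b hab
  have := congrArg (fun y => y.1) hab
  simpa [gD] using this

lemma fin2_val_sum (s : Fin 2) : s.val + (s + 1).val = 1 := by revert s; decide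

lemma card_C2 (k q : ℕ) :
    (C2 k q).card + (if q ∈ Qf (k+1) ∧ q ∈ Qf k ∧ q % 2 = 0 then 2 else 0)
      = (if q ∈ Qf (k+1) then 2 else 0) + (if q ∈ Qf k then 2 else 0) := by
  have hcardCC : (CC (k+2) q).card = 2 := by
    rw [CC, Finset.card_image_of_injective _ (gC_inj (k+2) q), Finset.card_univ,
      Fintype.card_fin]
  have hcardCD : (CD (k+2) q).card = 2 := by
    rw [CD, Finset.card_image_of_injective _ (gD_inj (k+2) q), Finset.card_univ,
      Fintype.card_fin]
  by_cases h1 : q ∈ Qf (k+1) <;> by_cases h2 : q ∈ Qf k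
  · -- both
    unfold C2
    rw [if_pos h1, if_pos h2]
    rcases Nat.mod_two_eq_zero_or_one q with hpar | hpar
    · rw [if_pos ⟨h1, h2, hpar⟩, if_pos h1, if_pos h2]
      have hfun : ∀ s : Fin 2, gD (k+2) s q = gC (k+2) s q := by
        intro s
        unfold gC gD
        rw [fin2_cast_even hpar, add_zero]
        have h3 : k + 2 - 1 + s.val + (s + 1).val = k + 2 := by
          have hv := fin2_val_sum s
          omega
        rw [h3]
      have hCD : CD (k+2) q = CC (k+2) q := by
        unfold CC CD
        apply Finset.image_congr
        intro s _
        exact hfun s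
      rw [hCD, Finset.union_self, hcardCC]
    · rw [if_neg (by omega), if_pos h1, if_pos h2]
      rw [Finset.card_union_of_disjoint, hcardCC, hcardCD]
      rw [Finset.disjoint_left]
      rintro y hyD hyC
      obtain ⟨a, -, rfl⟩ := Finset.mem_image.1 hyD
      obtain ⟨b, -, hb⟩ := Finset.mem_image.1 hyC
      have hab : b = a := by
        have := congrArg (fun y => y.1) hb
        simpa [gC, gD] using this
      subst hab
      have h3 := congrArg (fun y => y.2.2.1) hb
      simp only [gC, gD] at h3
      rw [fin2_cast_odd hpar, fin2_two] at h3
      have hv : b.val < 2 := b.isLt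
      omega
  · unfold C2
    rw [if_pos h1, if_neg h2, Finset.union_empty, if_neg (by tauto), if_pos h1,
      if_neg h2, hcardCD]
  · unfold C2
    rw [if_neg h1, if_pos h2, Finset.empty_union, if_neg (by tauto), if_neg h1,
      if_pos h2, hcardCC]
  · unfold C2
    rw [if_neg h1, if_neg h2, Finset.union_empty, if_neg (by tauto), if_neg h1,
      if_neg h2, Finset.card_empty]

lemma card_biUnion_C2 (k : ℕ) :
    (((Qf (k+1)) ∪ (Qf k)).biUnion (C2 k)).card
      + 2 * (((Qf (k+1)) ∩ (Qf k)).filter (fun q => q % 2 = 0)).card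
    = 2 * (Qf (k+1)).card + 2 * (Qf k).card := by
  rw [Finset.card_biUnion]
  · have key := fun q (_ : q ∈ (Qf (k+1)) ∪ (Qf k)) => card_C2 k q
    have hsum : ∑ q ∈ (Qf (k+1)) ∪ (Qf k), (C2 k q).card
        + ∑ q ∈ (Qf (k+1)) ∪ (Qf k), (if q ∈ Qf (k+1) ∧ q ∈ Qf k ∧ q % 2 = 0 then 2 else 0)
        = ∑ q ∈ (Qf (k+1)) ∪ (Qf k), (if q ∈ Qf (k+1) then 2 else 0)
        + ∑ q ∈ (Qf (k+1)) ∪ (Qf k), (if q ∈ Qf k then 2 else 0) := by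
      rw [← Finset.sum_add_distrib, ← Finset.sum_add_distrib]
      exact Finset.sum_congr rfl key
    have e1 : ∑ q ∈ (Qf (k+1)) ∪ (Qf k), (if q ∈ Qf (k+1) then 2 else 0)
        = 2 * (Qf (k+1)).card := by
      rw [Finset.sum_ite_mem, Finset.union_inter_cancel_left, Finset.sum_const, smul_eq_mul]
      ring
    have e2 : ∑ q ∈ (Qf (k+1)) ∪ (Qf k), (if q ∈ Qf k then 2 else 0)
        = 2 * (Qf k).card := by
      rw [Finset.sum_ite_mem, Finset.union_inter_cancel_right, Finset.sum_const, smul_eq_mul]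
      ring
    have e3 : ∑ q ∈ (Qf (k+1)) ∪ (Qf k), (if q ∈ Qf (k+1) ∧ q ∈ Qf k ∧ q % 2 = 0 then 2 else 0)
        = 2 * (((Qf (k+1)) ∩ (Qf k)).filter (fun q => q % 2 = 0)).card := by
      rw [Finset.sum_ite, Finset.sum_const, Finset.sum_const, smul_eq_mul, smul_eq_mul]
      have hf : Finset.filter (fun q => q ∈ Qf (k+1) ∧ q ∈ Qf k ∧ q % 2 = 0) ((Qf (k+1)) ∪ (Qf k))
          = ((Qf (k+1)) ∩ (Qf k)).filter (fun q => q % 2 = 0) := by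
        ext q
        simp only [Finset.mem_filter, Finset.mem_union, Finset.mem_inter]
        tauto
      rw [hf]
      ring
    omega
  · intro x hx y hy hxy
    rw [Function.onFun, Finset.disjoint_left]
    intro a hax hay
    exact hxy ((fourth_C2 hax).symm.trans (fourth_C2 hay))

lemma card_PAIRS (m : ℕ) : Nat.card (PAIRS (2*(m+1))) = (Qf m).card := by
  rw [Nat.card_coe_set_eq]
  exact Set.ncard_eq_toFinset_card _ (PAIRS_finite m)

lemma card_PAIRS_even (m : ℕ) : Nat.card {x : ℕ | x ∈ PAIRS (2*(m+1)) ∧ Even x}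
    = ((Qf m).filter (fun q => q % 2 = 0)).card := by
  have hset : {x : ℕ | x ∈ PAIRS (2*(m+1)) ∧ Even x}
      = ↑((Qf m).filter (fun q => q % 2 = 0)) := by
    ext x
    rw [Set.mem_setOf_eq, Finset.mem_coe, Finset.mem_filter, Qf,
      Set.Finite.mem_toFinset, Nat.even_iff]
  rw [hset, Nat.card_coe_set_eq, Set.ncard_coe_finset]

lemma card_PAIRS_inter (k : ℕ) :
    Nat.card {x : ℕ | x ∈ PAIRS (2*(k+2)) ∩ PAIRS (2*(k+1)) ∧ Even x}
      = (((Qf (k+1)) ∩ (Qf k)).filter (fun q => q % 2 = 0)).card := by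
  have hset : {x : ℕ | x ∈ PAIRS (2*(k+2)) ∩ PAIRS (2*(k+1)) ∧ Even x}
      = ↑(((Qf (k+1)) ∩ (Qf k)).filter (fun q => q % 2 = 0)) := by
    ext x
    rw [Set.mem_setOf_eq, Set.mem_inter_iff, Finset.mem_coe, Finset.mem_filter,
      Finset.mem_inter, Nat.even_iff]
    constructor
    · rintro ⟨⟨hx1, hx2⟩, hx3⟩
      refine ⟨⟨?_, ?_⟩, hx3⟩
      · rw [Qf, Set.Finite.mem_toFinset]; exact hx1
      · rw [Qf, Set.Finite.mem_toFinset]; exact hx2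
    · rintro ⟨⟨hx1, hx2⟩, hx3⟩
      rw [Qf, Set.Finite.mem_toFinset] at hx1 hx2
      exact ⟨⟨hx1, hx2⟩, hx3⟩
  rw [hset, Nat.card_coe_set_eq, Set.ncard_coe_finset]

lemma P_odd_final (m : ℕ) : P (2*(m+1)+1) =
    2 * (2 * Nat.card (PAIRS (2*(m+1))) - Nat.card {x : ℕ | x ∈ PAIRS (2*(m+1)) ∧ Even x}) := by
  rw [P_eq, range_odd, Nat.card_coe_set_eq, Set.ncard_coe_finset, card_biUnion_CA,
    card_PAIRS, card_PAIRS_even]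
  have := Finset.card_filter_le (Qf m) (fun q => q % 2 = 0)
  omega

lemma P_even_final (k : ℕ) : P (2*(k+1)+2) =
    2 * (Nat.card (PAIRS (2*(k+2))) + Nat.card (PAIRS (2*(k+1)))
      - Nat.card {x : ℕ | x ∈ PAIRS (2*(k+2)) ∩ PAIRS (2*(k+1)) ∧ Even x}) := by
  rw [P_eq, range_even, Nat.card_coe_set_eq, Set.ncard_coe_finset, card_PAIRS_inter]
  have h1 : Nat.card (PAIRS (2*(k+2))) = (Qf (k+1)).card := card_PAIRS (k+1)
  have h2 : Nat.card (PAIRS (2*(k+1))) = (Qf k).card := card_PAIRS k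
  rw [h1, h2]
  have := card_biUnion_C2 k
  omega

theorem thueMorse_P_via_PAIRS (n : ℕ) (hn : 4 ≤ n) :
    P (2 * n + 1) =
      2 * (2 * Nat.card (PAIRS (2 * n)) -
        Nat.card {x : ℕ | x ∈ PAIRS (2 * n) ∧ Even x}) ∧
    P (2 * n) =
      2 * (Nat.card (PAIRS (2 * n)) + Nat.card (PAIRS (2 * n - 2)) -
        Nat.card {x : ℕ | x ∈ PAIRS (2 * n) ∩ PAIRS (2 * n - 2) ∧ Even x}) := by
  obtain ⟨k, rfl⟩ : ∃ k, n = k + 2 := ⟨n - 2, by omega⟩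
  constructor
  · exact P_odd_final (k + 1)
  · have e : 2 * (k + 2) - 2 = 2 * (k + 1) := by omega
    rw [e]
    exact P_even_final k
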